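/- If K ⊆ X* is weak*-compact convex and B ⊆ K is norm-separable and (I)-generates K, then K equals the norm-closed convex hull of B. -/

import Mathlib

open Filter NormedSpace

/-- The weak*-closed convex hull of a set of functionals. -/
noncomputable def wstarClConvHull {X : Type*} [NormedAddCommGroup X] [NormedSpace ℝ X]
    (S : Set (StrongDual ℝ X)) : Set (StrongDual ℝ X) :=
  ⇑StrongDual.toWeakDual ⁻¹' closure (convexHull ℝ (⇑StrongDual.toWeakDual '' S))

/-- `B` (I)-generates `K` if, whenever `B` is written as a countable union
`B = ⋃ₙ Bₙ`, `K` is the norm-closed convex hull of the union of the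
weak*-closed convex hulls of the `Bₙ`. -/
def IGenerates {X : Type*} [NormedAddCommGroup X] [NormedSpace ℝ X]
    (B K : Set (StrongDual ℝ X)) : Prop :=
  ∀ Bn : ℕ → Set (StrongDual ℝ X), B = ⋃ n, Bn n →
    K = closure (convexHull ℝ (⋃ n, wstarClConvHull (Bn n)))

/-- The weak*-closed convex hull of a set contained in a norm-closed ball stays
inside that ball, since the ball is weak*-closed and convex. -/
theorem wstarClConvHull_subset_closedBall {X : Type*} [NormedAddCommGroup X]
    [NormedSpace ℝ X] (S : Set (StrongDual ℝ X)) (x : StrongDual ℝ X) (r : ℝ) (hr : 0 ≤ r)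
    (hS : S ⊆ Metric.closedBall x r) :
    wstarClConvHull S ⊆ Metric.closedBall x r := by
  intro f hf
  set T : Set (WeakDual ℝ X) := ⋂ y : X, {g : WeakDual ℝ X | ‖g y - x y‖ ≤ r * ‖y‖} with hT
  have hTclosed : IsClosed T := by
    refine isClosed_iInter fun y => ?_
    have hcont : Continuous fun g : WeakDual ℝ X => ‖g y - x y‖ :=
      ((WeakDual.eval_continuous y).sub continuous_const).norm
    exact isClosed_le hcont continuous_const
  have hTconv : Convex ℝ T := by
    refine convex_iInter fun y => ?_
    intro g1 hg g2 hh a b ha hb hab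
    simp only [Set.mem_setOf_eq] at hg hh ⊢
    have hval : (a • g1 + b • g2) y = a • g1 y + b • g2 y := rfl
    rw [hval]
    have : a • g1 y + b • g2 y - x y = a • (g1 y - x y) + b • (g2 y - x y) := by
      simp only [smul_eq_mul]
      linear_combination (x y) * hab
    rw [this]
    calc ‖a • (g1 y - x y) + b • (g2 y - x y)‖
        ≤ ‖a • (g1 y - x y)‖ + ‖b • (g2 y - x y)‖ := norm_add_le _ _
      _ = a * ‖g1 y - x y‖ + b * ‖g2 y - x y‖ := by
          rw [norm_smul, norm_smul, Real.norm_of_nonneg ha, Real.norm_of_nonneg hb]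
      _ ≤ a * (r * ‖y‖) + b * (r * ‖y‖) := by
          gcongr
      _ = r * ‖y‖ := by rw [← add_mul, hab, one_mul]
  have himage : ⇑StrongDual.toWeakDual '' S ⊆ T := by
    rintro _ ⟨s, hsS, rfl⟩
    refine Set.mem_iInter.2 fun y => ?_
    have hsd : ‖s - x‖ ≤ r := by
      have := hS hsS
      rwa [Metric.mem_closedBall, dist_eq_norm] at this
    have : ‖(s - x) y‖ ≤ ‖s - x‖ * ‖y‖ := (s - x).le_opNorm y
    calc ‖(StrongDual.toWeakDual s) y - x y‖ = ‖(s - x) y‖ := by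
          simp [ContinuousLinearMap.sub_apply]
      _ ≤ ‖s - x‖ * ‖y‖ := this
      _ ≤ r * ‖y‖ := by gcongr
  have hfT : StrongDual.toWeakDual f ∈ T :=
    closure_minimal (convexHull_min himage hTconv) hTclosed hf
  have hbound : ∀ y : X, ‖(f - x) y‖ ≤ r * ‖y‖ := by
    intro y
    have := Set.mem_iInter.1 hfT y
    simp only [Set.mem_setOf_eq] at this
    simpa using this
  rw [Metric.mem_closedBall, dist_eq_norm]
  exact ContinuousLinearMap.opNorm_le_bound _ hr hbound

/-- If a norm-separable subset `B` of a weak*-compact convex set `K`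
(I)-generates `K`, then `K` is the norm-closed convex hull of `B`. -/
theorem separable_IGenerating_closure {X : Type*} [NormedAddCommGroup X]
    [NormedSpace ℝ X] [CompleteSpace X]
    (K : Set (StrongDual ℝ X)) (hKcomp : IsCompact (⇑StrongDual.toWeakDual '' K))
    (hKconv : Convex ℝ K)
    (B : Set (StrongDual ℝ X)) (hBK : B ⊆ K)
    (hsep : TopologicalSpace.IsSeparable B)
    (hI : IGenerates B K) :
    K = closure (convexHull ℝ B) := by
  set C := closure (convexHull ℝ B) with hC
  -- C ⊆ K : apply IGenerates with the constant decomposition Bn = B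
  have hCK : C ⊆ K := by
    have h1 := hI (fun _ => B) (Set.iUnion_const B).symm
    have hBsub : B ⊆ ⋃ n : ℕ, wstarClConvHull B := by
      intro b hb
      have hmem : StrongDual.toWeakDual b ∈ closure (convexHull ℝ (⇑StrongDual.toWeakDual '' B)) :=
        subset_closure (subset_convexHull ℝ _ (Set.mem_image_of_mem _ hb))
      exact Set.mem_iUnion.2 ⟨0, hmem⟩
    rw [h1]
    exact closure_mono (convexHull_mono hBsub)
  -- K ⊆ C
  have hKC : K ⊆ C := by
    rcases Set.eq_empty_or_nonempty B with hBe | hBne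
    · have h0 := hI (fun _ => (∅ : Set (StrongDual ℝ X))) (by simp [hBe])
      have : (⋃ n : ℕ, wstarClConvHull (∅ : Set (StrongDual ℝ X))) = ∅ := by
        simp [wstarClConvHull]
      rw [h0, this]
      simp
    · -- B nonempty; show every point of K is in closure C = C
      have hCclosed : IsClosed C := isClosed_closure
      have hCconv : Convex ℝ C := (convex_convexHull ℝ B).closure
      have hCne : C.Nonempty := hBne.mono ((subset_convexHull ℝ B).trans subset_closure)
      intro f hf
      rw [← hCclosed.closure_eq]
      rw [Metric.mem_closure_iff]
      intro ε hε
      -- countable dense set for B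
      obtain ⟨c, hc_count, hc_dense⟩ := hsep
      have hcne : c.Nonempty := by
        rcases hBne with ⟨b, hb⟩
        by_contra h
        rw [Set.not_nonempty_iff_eq_empty] at h
        have := hc_dense hb
        simp [h] at this
      obtain ⟨u, hu⟩ := Set.Countable.exists_eq_range hc_count hcne
      set δ := ε / 3 with hδ
      have hδpos : 0 < δ := by positivity
      set Bn : ℕ → Set (StrongDual ℝ X) := fun n => B ∩ Metric.closedBall (u n) δ with hBn
      have hcover : B = ⋃ n, Bn n := by
        apply Set.Subset.antisymm
        · intro b hb
          have : b ∈ closure c := hc_dense hb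
          rw [Metric.mem_closure_iff] at this
          obtain ⟨x, hxc, hxd⟩ := this δ hδpos
          rw [hu] at hxc
          obtain ⟨n, rfl⟩ := hxc
          exact Set.mem_iUnion.2 ⟨n, hb, Metric.mem_closedBall.2 hxd.le⟩
        · exact Set.iUnion_subset fun n => Set.inter_subset_left
      have hKeq := hI Bn hcover
      -- each wstarClConvHull (Bn n) is within 2δ of C
      have hsubthick : (⋃ n, wstarClConvHull (Bn n)) ⊆ Metric.cthickening (2 * δ) C := by
        intro y hy
        obtain ⟨n, hyn⟩ := Set.mem_iUnion.1 hy
        rcases Set.eq_empty_or_nonempty (Bn n) with he | ⟨b, hbBn⟩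
        · rw [he] at hyn
          simp [wstarClConvHull] at hyn
        · have hball : wstarClConvHull (Bn n) ⊆ Metric.closedBall (u n) δ :=
            wstarClConvHull_subset_closedBall _ _ _ hδpos.le Set.inter_subset_right
          have h1 : dist y (u n) ≤ δ := Metric.mem_closedBall.1 (hball hyn)
          have h2 : dist (u n) b ≤ δ := by
            have := hbBn.2
            rw [Metric.mem_closedBall, dist_comm] at this
            exact this
          have hbC : b ∈ C := subset_closure (subset_convexHull ℝ B hbBn.1)
          refine Metric.mem_cthickening_of_dist_le y b _ _ hbC ?_
          calc dist y b ≤ dist y (u n) + dist (u n) b := dist_triangle _ _ _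
            _ ≤ δ + δ := add_le_add h1 h2
            _ = 2 * δ := by ring
      have hthick_conv : Convex ℝ (Metric.cthickening (2 * δ) C) := hCconv.cthickening _
      have hthick_closed : IsClosed (Metric.cthickening (2 * δ) C) :=
        Metric.isClosed_cthickening
      have hKsub : K ⊆ Metric.cthickening (2 * δ) C := by
        rw [hKeq]
        exact closure_minimal (convexHull_min hsubthick hthick_conv) hthick_closed
      have hfthick : f ∈ Metric.thickening ε C := by
        refine Metric.cthickening_subset_thickening' hε ?_ C (hKsub hf)
        rw [hδ]; linarith
      obtain ⟨z, hzC, hzd⟩ := Metric.mem_thickening_iff.1 hfthick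
      exact ⟨z, hzC, hzd⟩
  exact Set.Subset.antisymm hKC hCK
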